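/- Let k ≥ 2, a ∈ (0,1), β > 0 and m ∈ ℕ. There exist constants C > 0 (depending only on k, m, a) and S0 > 0 such that for every s ≥ S0, with w(Y) := Y^{-a}·(1+s^{-β}·Y)^{-m}, the following hold for every locally absolutely continuous f : [0,∞) → ℝ with a.e. derivative f': (i) if f(0) = 0, then ∫_0^∞ f²·(1+Y)^{-k}·w dY ≤ C·∫_0^∞ (f')²·(1+Y)^{-(k-2)}·w dY; (ii) if f(Y) = O(Y^{k/2}) as Y → 0, then ∫_0^∞ f²·Y^{-k}·w dY ≤ C·∫_0^∞ (f')²·Y^{-(k-2)}·w dY. -/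

import Mathlib

open Set MeasureTheory Filter Asymptotics
open scoped Topology ENNReal

namespace HardyAux

lemma lint_Ioi_shift (c t : ℝ) (g : ℝ → ℝ≥0∞) (hg : Measurable g) :
    ∫⁻ x in Ioi t, g (c + x) = ∫⁻ x in Ioi (c + t), g x := by
  conv_rhs => rw [← map_add_left_eq_self (volume : Measure ℝ) c]
  rw [setLIntegral_map measurableSet_Ioi hg (measurable_const_add c)]
  have : (fun x => c + x) ⁻¹' Ioi (c + t) = Ioi t := by
    ext x; simp [add_lt_add_iff_left]
  rw [this]

lemma lint_rpow_Ioi {e c : ℝ} (he : e < -1) (hc : 0 < c) :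
    ∫⁻ x in Ioi c, ENNReal.ofReal (x ^ e) = ENNReal.ofReal (c ^ (e + 1) / (-(e + 1))) := by
  have hnn : 0 ≤ᵐ[volume.restrict (Ioi c)] fun x : ℝ => x ^ e := by
    filter_upwards [ae_restrict_mem measurableSet_Ioi] with x hx
    exact Real.rpow_nonneg (hc.trans hx).le _
  rw [← ofReal_integral_eq_lintegral_ofReal (integrableOn_Ioi_rpow_of_lt he hc) hnn,
    integral_Ioi_rpow_of_lt he hc]
  rw [div_neg, neg_div]

lemma lint_one_add_Ioi (t : ℝ) (ht : 0 < t) :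
    ∫⁻ x in Ioi t, ENNReal.ofReal ((1 + x) ^ (-2 : ℝ)) = ENNReal.ofReal ((1 + t)⁻¹) := by
  have hg : Measurable fun x : ℝ => ENNReal.ofReal (x ^ (-2 : ℝ)) := by fun_prop
  have := lint_Ioi_shift 1 t (fun x => ENNReal.ofReal (x ^ (-2 : ℝ))) hg
  rw [this, lint_rpow_Ioi (by norm_num) (by linarith)]
  norm_num [Real.rpow_neg_one]

lemma lint_rpow_Ioo {e Y : ℝ} (he : -1 < e) (hY : 0 < Y) :
    ∫⁻ t in Ioo 0 Y, ENNReal.ofReal (t ^ e) = ENNReal.ofReal (Y ^ (e + 1) / (e + 1)) := by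
  have hint : IntegrableOn (fun t : ℝ => t ^ e) (Ioo 0 Y) := by
    have h := intervalIntegral.intervalIntegrable_rpow' (a := 0) (b := Y) he
    exact ((intervalIntegrable_iff_integrableOn_Ioc_of_le hY.le).mp h).mono_set
      Ioo_subset_Ioc_self
  have hnn : 0 ≤ᵐ[volume.restrict (Ioo 0 Y)] fun t : ℝ => t ^ e := by
    filter_upwards [ae_restrict_mem measurableSet_Ioo] with t htm
    exact Real.rpow_nonneg htm.1.le _
  rw [← ofReal_integral_eq_lintegral_ofReal hint hnn]
  congr 1
  rw [← integral_Ioc_eq_integral_Ioo, ← intervalIntegral.integral_of_le hY.le,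
    integral_rpow (Or.inl he), Real.zero_rpow (by linarith), sub_zero]

lemma swap_lemma (g h : ℝ → ℝ≥0∞) (hg : Measurable g) (hh : Measurable h) :
    ∫⁻ Y in Ioi 0, g Y * ∫⁻ t in Ioo 0 Y, h t
      = ∫⁻ t in Ioi 0, h t * ∫⁻ Y in Ioi t, g Y := by
  set F : ℝ × ℝ → ℝ≥0∞ := fun p => {q : ℝ × ℝ | q.2 < q.1}.indicator (fun q => g q.1 * h q.2) p
    with hF
  have hS : MeasurableSet {q : ℝ × ℝ | q.2 < q.1} := measurableSet_lt measurable_snd measurable_fst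
  have hFm : Measurable F :=
    Measurable.indicator ((hg.comp measurable_fst).mul (hh.comp measurable_snd)) hS
  have key : ∫⁻ Y in Ioi 0, ∫⁻ t in Ioi 0, F (Y, t)
      = ∫⁻ t in Ioi 0, ∫⁻ Y in Ioi 0, F (Y, t) :=
    lintegral_lintegral_swap hFm.aemeasurable
  calc ∫⁻ Y in Ioi 0, g Y * ∫⁻ t in Ioo 0 Y, h t
      = ∫⁻ Y in Ioi 0, ∫⁻ t in Ioi 0, F (Y, t) := by
        refine lintegral_congr fun Y => ?_
        have h1 : (fun t => F (Y, t)) = (Iio Y).indicator (fun t => g Y * h t) := by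
          funext t
          by_cases htY : t < Y <;> simp [hF, Set.indicator, htY]
        rw [h1, lintegral_indicator measurableSet_Iio,
          Measure.restrict_restrict measurableSet_Iio]
        have h2 : Iio Y ∩ Ioi 0 = Ioo 0 Y := by ext x; simp [mem_Ioo, and_comm]
        rw [h2, lintegral_const_mul (g Y) hh]
    _ = ∫⁻ t in Ioi 0, ∫⁻ Y in Ioi 0, F (Y, t) := key
    _ = ∫⁻ t in Ioi 0, h t * ∫⁻ Y in Ioi t, g Y := by
        refine setLIntegral_congr_fun measurableSet_Ioi (fun t ht => ?_)
        have h1 : (fun Y => F (Y, t)) = (Ioi t).indicator (fun Y => g Y * h t) := by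
          funext Y
          by_cases htY : t < Y <;> simp [hF, Set.indicator, htY]
        rw [h1, lintegral_indicator measurableSet_Ioi,
          Measure.restrict_restrict measurableSet_Ioi]
        have h2 : Ioi t ∩ Ioi 0 = Ioi t := by
          refine inter_eq_left.mpr (Ioi_subset_Ioi ht.le)
        rw [h2, lintegral_mul_const (h t) hg, mul_comm]

end HardyAux

namespace HardyAux
open Set MeasureTheory Filter
open scoped Topology ENNReal

lemma pointwise_cs (f' : ℝ → ℝ) {b Y : ℝ} (hb0 : 0 ≤ b) (hb1 : b < 1) (hY : 0 < Y)
    (hint : IntervalIntegrable f' volume 0 Y) :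
    ENNReal.ofReal ((∫ t in (0:ℝ)..Y, f' t) ^ 2)
      ≤ ENNReal.ofReal (Y ^ (1 - b) / (1 - b)) *
        ∫⁻ t in Ioo 0 Y, ENNReal.ofReal ((f' t) ^ 2 * t ^ b) := by
  have hIOn : IntegrableOn f' (Ioo 0 Y) :=
    ((intervalIntegrable_iff_integrableOn_Ioc_of_le hY.le).mp hint).mono_set Ioo_subset_Ioc_self
  set A := ∫ t in Ioo 0 Y, |f' t| with hA
  have hA0 : 0 ≤ A := integral_nonneg fun t => abs_nonneg _
  have h1 : |∫ t in (0:ℝ)..Y, f' t| ≤ A := by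
    refine (intervalIntegral.abs_integral_le_integral_abs hY.le).trans_eq ?_
    rw [intervalIntegral.integral_of_le hY.le, integral_Ioc_eq_integral_Ioo]
  have h2 : (∫ t in (0:ℝ)..Y, f' t) ^ 2 ≤ A ^ 2 := by
    rw [← sq_abs]; exact pow_le_pow_left₀ (abs_nonneg _) h1 2
  have h3 : ENNReal.ofReal A = ∫⁻ t in Ioo 0 Y, ENNReal.ofReal |f' t| :=
    ofReal_integral_eq_lintegral_ofReal hIOn.abs (ae_of_all _ fun t => abs_nonneg _)
  set φ := fun t : ℝ => ENNReal.ofReal (|f' t| * t ^ (b / 2)) with hφ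
  set ψ := fun t : ℝ => ENNReal.ofReal (t ^ (-(b / 2))) with hψ
  have hφm : AEMeasurable φ (volume.restrict (Ioo 0 Y)) := by
    refine ENNReal.measurable_ofReal.comp_aemeasurable ?_
    exact hIOn.abs.aemeasurable.mul ((by fun_prop : Measurable fun t : ℝ => t ^ (b / 2)).aemeasurable)
  have hψm : AEMeasurable ψ (volume.restrict (Ioo 0 Y)) := by fun_prop
  have hpq : Real.HolderConjugate 2 2 := Real.HolderConjugate.two_two
  have hH := ENNReal.lintegral_mul_le_Lp_mul_Lq (volume.restrict (Ioo 0 Y)) hpq hφm hψm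
  -- identify the pieces
  have eφ : ∫⁻ t in Ioo 0 Y, φ t ^ (2:ℝ)
      = ∫⁻ t in Ioo 0 Y, ENNReal.ofReal ((f' t) ^ 2 * t ^ b) := by
    refine lintegral_congr_ae ?_
    filter_upwards [ae_restrict_mem measurableSet_Ioo] with t htm
    have ht0 : 0 < t := htm.1
    rw [hφ, ENNReal.ofReal_rpow_of_nonneg (by positivity) (by norm_num)]
    congr 1
    rw [show (2:ℝ) = ((2:ℕ):ℝ) by norm_num, Real.rpow_natCast]
    rw [mul_pow, sq_abs]
    congr 1
    rw [sq, ← Real.rpow_add ht0]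
    norm_num
  have eψ : ∫⁻ t in Ioo 0 Y, ψ t ^ (2:ℝ)
      = ENNReal.ofReal (Y ^ (1 - b) / (1 - b)) := by
    have : ∫⁻ t in Ioo 0 Y, ψ t ^ (2:ℝ) = ∫⁻ t in Ioo 0 Y, ENNReal.ofReal (t ^ (-b)) := by
      refine lintegral_congr_ae ?_
      filter_upwards [ae_restrict_mem measurableSet_Ioo] with t htm
      have ht0 : 0 < t := htm.1
      rw [hψ, ENNReal.ofReal_rpow_of_nonneg (by positivity) (by norm_num)]
      congr 1
      rw [show (2:ℝ) = ((2:ℕ):ℝ) by norm_num, Real.rpow_natCast, sq, ← Real.rpow_add ht0]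
      congr 1
      ring
    rw [this, lint_rpow_Ioo (by linarith) hY, show (-b + 1 : ℝ) = 1 - b from by ring]
  have eprod : ∫⁻ t in Ioo 0 Y, ENNReal.ofReal |f' t| ≤ ∫⁻ t in Ioo 0 Y, (φ * ψ) t := by
    refine lintegral_mono_ae ?_
    filter_upwards [ae_restrict_mem measurableSet_Ioo] with t htm
    have ht0 : 0 < t := htm.1
    have : (φ * ψ) t = ENNReal.ofReal (|f' t| * t ^ (b/2) * t ^ (-(b/2))) := by
      rw [Pi.mul_apply, hφ, hψ, ← ENNReal.ofReal_mul (by positivity)]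
    rw [this, mul_assoc, ← Real.rpow_add ht0]
    simp
  calc ENNReal.ofReal ((∫ t in (0:ℝ)..Y, f' t) ^ 2)
      ≤ ENNReal.ofReal (A ^ 2) := ENNReal.ofReal_le_ofReal h2
    _ = (ENNReal.ofReal A) ^ 2 := (ENNReal.ofReal_pow hA0 2)
    _ = (∫⁻ t in Ioo 0 Y, ENNReal.ofReal |f' t|) ^ 2 := by rw [h3]
    _ ≤ (∫⁻ t in Ioo 0 Y, (φ * ψ) t) ^ 2 := by exact pow_le_pow_left' eprod 2
    _ ≤ ((∫⁻ t in Ioo 0 Y, φ t ^ (2:ℝ)) ^ ((1:ℝ)/2) *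
          (∫⁻ t in Ioo 0 Y, ψ t ^ (2:ℝ)) ^ ((1:ℝ)/2)) ^ 2 := by
        exact pow_le_pow_left' hH 2
    _ = (∫⁻ t in Ioo 0 Y, φ t ^ (2:ℝ)) * (∫⁻ t in Ioo 0 Y, ψ t ^ (2:ℝ)) := by
        set X := ∫⁻ t in Ioo 0 Y, φ t ^ (2:ℝ)
        set Z := ∫⁻ t in Ioo 0 Y, ψ t ^ (2:ℝ)
        rw [sq, mul_mul_mul_comm, ← ENNReal.rpow_add_of_nonneg _ _ (by norm_num) (by norm_num),
          ← ENNReal.rpow_add_of_nonneg _ _ (by norm_num) (by norm_num)]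
        norm_num
    _ = ENNReal.ofReal (Y ^ (1 - b) / (1 - b)) *
          ∫⁻ t in Ioo 0 Y, ENNReal.ofReal ((f' t) ^ 2 * t ^ b) := by
        rw [eφ, eψ, mul_comm]

end HardyAux

namespace HardyAux
open Set MeasureTheory Filter Asymptotics
open scoped Topology ENNReal

lemma f'_aemeas (f' : ℝ → ℝ)
    (hint : ∀ x : ℝ, 0 ≤ x → IntervalIntegrable f' volume 0 x) :
    AEMeasurable f' (volume.restrict (Ioi 0)) := by
  have hU : Ioi (0:ℝ) = ⋃ n : ℕ, Ioc 0 (n:ℝ) := by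
    ext x
    simp only [mem_Ioi, mem_iUnion, mem_Ioc]
    constructor
    · intro hx
      obtain ⟨n, hn⟩ := exists_nat_ge x
      exact ⟨n, hx, hn⟩
    · rintro ⟨n, h, -⟩
      exact h
  rw [hU, aemeasurable_iUnion_iff]
  intro n
  exact ((intervalIntegrable_iff_integrableOn_Ioc_of_le (Nat.cast_nonneg n)).mp
    (hint n (Nat.cast_nonneg n))).aemeasurable

lemma core (f' : ℝ → ℝ) (hf'int : ∀ x : ℝ, 0 ≤ x → IntervalIntegrable f' volume 0 x)
    {b : ℝ} (hb0 : 0 ≤ b) (hb1 : b < 1)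
    (G : ℝ → ℝ≥0∞) (hG : Measurable G) :
    ∫⁻ Y in Ioi 0, ENNReal.ofReal ((∫ t in (0:ℝ)..Y, f' t) ^ 2) * G Y
      ≤ ∫⁻ t in Ioi 0, ENNReal.ofReal ((f' t) ^ 2 * t ^ b) *
          ∫⁻ Y in Ioi t, ENNReal.ofReal (Y ^ (1 - b) / (1 - b)) * G Y := by
  set h : ℝ → ℝ≥0∞ := fun t => ENNReal.ofReal ((f' t) ^ 2 * t ^ b) with hh
  have hhaem : AEMeasurable h (volume.restrict (Ioi 0)) := by
    refine ENNReal.measurable_ofReal.comp_aemeasurable ?_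
    exact ((f'_aemeas f' hf'int).pow_const 2).mul
      ((by fun_prop : Measurable fun t : ℝ => t ^ b).aemeasurable)
  set h2 : ℝ → ℝ≥0∞ := hhaem.mk h with hh2
  have h2meas : Measurable h2 := hhaem.measurable_mk
  have h2ae : h =ᵐ[volume.restrict (Ioi 0)] h2 := hhaem.ae_eq_mk
  set g : ℝ → ℝ≥0∞ := fun Y => ENNReal.ofReal (Y ^ (1 - b) / (1 - b)) * G Y with hg
  have hgmeas : Measurable g := by
    exact ((by fun_prop : Measurable fun Y : ℝ => ENNReal.ofReal (Y ^ (1 - b) / (1 - b))).mul hG)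
  calc ∫⁻ Y in Ioi 0, ENNReal.ofReal ((∫ t in (0:ℝ)..Y, f' t) ^ 2) * G Y
      ≤ ∫⁻ Y in Ioi 0, g Y * ∫⁻ t in Ioo 0 Y, h2 t := by
        refine lintegral_mono_ae ?_
        filter_upwards [ae_restrict_mem measurableSet_Ioi] with Y hY
        have hcs := pointwise_cs f' hb0 hb1 hY (hf'int Y (le_of_lt hY))
        have : ∫⁻ t in Ioo 0 Y, h t = ∫⁻ t in Ioo 0 Y, h2 t := by
          refine lintegral_congr_ae ?_
          exact ae_restrict_of_ae_restrict_of_subset (fun t ht => ht.1) h2ae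
        calc ENNReal.ofReal ((∫ t in (0:ℝ)..Y, f' t) ^ 2) * G Y
            ≤ (ENNReal.ofReal (Y ^ (1 - b) / (1 - b)) * ∫⁻ t in Ioo 0 Y, h t) * G Y :=
              mul_le_mul_left hcs _
          _ = g Y * ∫⁻ t in Ioo 0 Y, h2 t := by rw [this, hg, mul_right_comm]
    _ = ∫⁻ t in Ioi 0, h2 t * ∫⁻ Y in Ioi t, g Y := swap_lemma g h2 hgmeas h2meas
    _ = ∫⁻ t in Ioi 0, h t * ∫⁻ Y in Ioi t, g Y := by
        refine lintegral_congr_ae ?_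
        filter_upwards [h2ae] with t ht
        rw [ht]

lemma f0_zero {k : ℝ} (hk : 0 < k) (f f' : ℝ → ℝ)
    (hint : IntervalIntegrable f' volume 0 1)
    (hrepr : ∀ x : ℝ, 0 ≤ x → f x = f 0 + ∫ t in (0:ℝ)..x, f' t)
    (hO : f =O[𝓝[>] (0:ℝ)] fun Y : ℝ => Y ^ (k / 2)) : f 0 = 0 := by
  have h1 : Tendsto f (𝓝[>] (0:ℝ)) (𝓝 0) := by
    refine hO.trans_tendsto ?_
    have hc : ContinuousAt (fun Y : ℝ => Y ^ (k / 2)) 0 :=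
      Real.continuousAt_rpow_const 0 (k / 2) (Or.inr (by positivity))
    have := hc.tendsto.mono_left (nhdsWithin_le_nhds (s := Ioi (0:ℝ)))
    rwa [Real.zero_rpow (by positivity)] at this
  have hIcc : IntegrableOn f' (Icc 0 1) := by
    have h := (intervalIntegrable_iff_integrableOn_Ioc_of_le zero_le_one).mp hint
    exact h.congr_set_ae Ioc_ae_eq_Icc.symm
  have hcont : ContinuousOn (fun x => ∫ t in Ioc 0 x, f' t) (Icc 0 1) :=
    intervalIntegral.continuousOn_primitive hIcc
  have hF : Tendsto (fun x => ∫ t in Ioc 0 x, f' t) (𝓝[>] (0:ℝ)) (𝓝 0) := by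
    have h0 : (0:ℝ) ∈ Icc (0:ℝ) 1 := ⟨le_refl _, zero_le_one⟩
    have := (hcont 0 h0)
    rw [ContinuousWithinAt] at this
    have h00 : ∫ t in Ioc (0:ℝ) 0, f' t = 0 := by simp
    rw [h00] at this
    refine this.mono_left ?_
    rw [← nhdsWithin_Ioc_eq_nhdsGT (zero_lt_one : (0:ℝ) < 1)]
    exact nhdsWithin_mono 0 Ioc_subset_Icc_self
  have h2 : Tendsto f (𝓝[>] (0:ℝ)) (𝓝 (f 0 + 0)) := by
    refine Tendsto.congr' ?_ (tendsto_const_nhds.add hF)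
    filter_upwards [Ioc_mem_nhdsGT (zero_lt_one : (0:ℝ) < 1)] with x hx
    rw [hrepr x hx.1.le, intervalIntegral.integral_of_le hx.1.le]
  have := tendsto_nhds_unique h2 h1
  linarith

end HardyAux

open HardyAux in
/-- Special case of the weighted Hardy inequality with the weight
`w(s,Y) = Y^{-a}(1+s^{-β}Y)^{-m}`: the constant is independent of `s` for `s` large. -/
theorem hardy_special_weights (k a beta : ℝ) (m : ℕ)
    (hk : 2 ≤ k) (ha : a ∈ Ioo (0:ℝ) 1) (hbeta : 0 < beta) :
    ∃ C : ℝ, 0 < C ∧ ∃ S0 : ℝ, 0 < S0 ∧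
      ∀ s : ℝ, S0 ≤ s →
        ∀ f f' : ℝ → ℝ,
          (∀ x : ℝ, 0 ≤ x → IntervalIntegrable f' volume 0 x) →
          (∀ x : ℝ, 0 ≤ x → f x = f 0 + ∫ t in (0:ℝ)..x, f' t) →
          ((f 0 = 0 →
            (∫⁻ Y in Ioi (0:ℝ), ENNReal.ofReal
                ((f Y) ^ 2 * (1 + Y) ^ (-k) * (Y ^ (-a) * (1 + s ^ (-beta) * Y) ^ (-(m:ℝ)))))
              ≤ ENNReal.ofReal C * ∫⁻ Y in Ioi (0:ℝ), ENNReal.ofReal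
                ((f' Y) ^ 2 * (1 + Y) ^ (-(k - 2)) * (Y ^ (-a) * (1 + s ^ (-beta) * Y) ^ (-(m:ℝ)))))
          ∧ ((f =O[nhdsWithin 0 (Ioi 0)] fun Y => Y ^ (k / 2)) →
            (∫⁻ Y in Ioi (0:ℝ), ENNReal.ofReal
                ((f Y) ^ 2 * Y ^ (-k) * (Y ^ (-a) * (1 + s ^ (-beta) * Y) ^ (-(m:ℝ)))))
              ≤ ENNReal.ofReal C * ∫⁻ Y in Ioi (0:ℝ), ENNReal.ofReal
                ((f' Y) ^ 2 * Y ^ (-(k - 2)) * (Y ^ (-a) * (1 + s ^ (-beta) * Y) ^ (-(m:ℝ)))))) := by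
  obtain ⟨ha0, ha1⟩ := ha
  refine ⟨1/a, by positivity, 1, one_pos, fun s hs f f' hf'int hfrepr => ?_⟩
  have hs0 : (0:ℝ) ≤ s := le_trans zero_le_one hs
  set r : ℝ := s ^ (-beta) with hrdef
  have hr : 0 ≤ r := Real.rpow_nonneg hs0 _
  have hm : -(m:ℝ) ≤ 0 := neg_nonpos.mpr (Nat.cast_nonneg m)
  have hvmono : ∀ {t Y : ℝ}, 0 < t → t ≤ Y →
      (1 + r * Y) ^ (-(m:ℝ)) ≤ (1 + r * t) ^ (-(m:ℝ)) := by
    intro t Y ht htY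
    refine Real.rpow_le_rpow_of_nonpos (by positivity) ?_ hm
    nlinarith [mul_le_mul_of_nonneg_left htY hr]
  constructor
  · -- part (i)
    intro hf0
    set G : ℝ → ℝ≥0∞ :=
      fun Y => ENNReal.ofReal ((1 + Y) ^ (-k) * (Y ^ (-a) * (1 + r * Y) ^ (-(m:ℝ)))) with hG
    have hGmeas : Measurable G := by fun_prop
    have hrep : ∀ Y : ℝ, 0 ≤ Y → f Y = ∫ t in (0:ℝ)..Y, f' t := fun Y hY => by
      rw [hfrepr Y hY, hf0, zero_add]
    have hLHS : (∫⁻ Y in Ioi (0:ℝ), ENNReal.ofReal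
          ((f Y) ^ 2 * (1 + Y) ^ (-k) * (Y ^ (-a) * (1 + r * Y) ^ (-(m:ℝ)))))
        = ∫⁻ Y in Ioi (0:ℝ), ENNReal.ofReal ((∫ t in (0:ℝ)..Y, f' t) ^ 2) * G Y := by
      refine setLIntegral_congr_fun measurableSet_Ioi (fun Y hY => ?_)
      rw [← hrep Y (le_of_lt hY), mul_assoc, ENNReal.ofReal_mul (sq_nonneg _)]
    rw [hLHS]
    refine (core f' hf'int (b := 1 - a) (by linarith) (by linarith) G hGmeas).trans ?_
    have hstep : ∀ t : ℝ, t ∈ Ioi (0:ℝ) →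
        ENNReal.ofReal ((f' t) ^ 2 * t ^ (1 - a)) *
          (∫⁻ Y in Ioi t, ENNReal.ofReal (Y ^ (1 - (1 - a)) / (1 - (1 - a))) * G Y)
        ≤ ENNReal.ofReal (1/a) * ENNReal.ofReal
            ((f' t) ^ 2 * (1 + t) ^ (-(k - 2)) * (t ^ (-a) * (1 + r * t) ^ (-(m:ℝ)))) := by
      intro t ht
      rw [mem_Ioi] at ht
      set c : ℝ := (1/a) * ((1 + t) ^ ((2:ℝ) - k) * (1 + r * t) ^ (-(m:ℝ))) with hc
      have hc0 : 0 ≤ c := by positivity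
      have hTail : (∫⁻ Y in Ioi t, ENNReal.ofReal (Y ^ (1 - (1 - a)) / (1 - (1 - a))) * G Y)
          ≤ ENNReal.ofReal c * ENNReal.ofReal ((1 + t)⁻¹) := by
        calc ∫⁻ Y in Ioi t, ENNReal.ofReal (Y ^ (1 - (1 - a)) / (1 - (1 - a))) * G Y
            ≤ ∫⁻ Y in Ioi t, ENNReal.ofReal (c * (1 + Y) ^ (-2:ℝ)) := by
              refine lintegral_mono_ae ?_
              filter_upwards [ae_restrict_mem measurableSet_Ioi] with Y hY
              rw [mem_Ioi] at hY
              have hY0 : 0 < Y := ht.trans hY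
              rw [show (1:ℝ) - (1 - a) = a from by ring, hG,
                ← ENNReal.ofReal_mul (by positivity)]
              refine ENNReal.ofReal_le_ofReal ?_
              have e1 : Y ^ a * Y ^ (-a) = 1 := by
                rw [← Real.rpow_add hY0]; simp
              have e2 : (1 + Y) ^ (-k) = (1 + Y) ^ ((2:ℝ) - k) * (1 + Y) ^ (-2:ℝ) := by
                rw [← Real.rpow_add (by linarith)]; ring_nf
              have e3 : (1 + Y) ^ ((2:ℝ) - k) ≤ (1 + t) ^ ((2:ℝ) - k) :=
                Real.rpow_le_rpow_of_nonpos (by linarith) (by linarith) (by linarith)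
              have e4 : (1 + r * Y) ^ (-(m:ℝ)) ≤ (1 + r * t) ^ (-(m:ℝ)) :=
                hvmono ht hY.le
              have h5 : (0:ℝ) < a := ha0
              calc Y ^ a / a *
                    ((1 + Y) ^ (-k) * (Y ^ (-a) * (1 + r * Y) ^ (-(m:ℝ))))
                  = (1/a) * ((1 + Y) ^ (-k) * (1 + r * Y) ^ (-(m:ℝ))) * (Y ^ a * Y ^ (-a)) := by
                    ring
                _ = (1/a) * ((1 + Y) ^ ((2:ℝ) - k) * (1 + r * Y) ^ (-(m:ℝ))) *
                      (1 + Y) ^ (-2:ℝ) := by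
                    rw [e1, e2]; ring
                _ ≤ (1/a) * ((1 + t) ^ ((2:ℝ) - k) * (1 + r * t) ^ (-(m:ℝ))) *
                      (1 + Y) ^ (-2:ℝ) := by
                    have hmul : (1 + Y) ^ ((2:ℝ) - k) * (1 + r * Y) ^ (-(m:ℝ))
                        ≤ (1 + t) ^ ((2:ℝ) - k) * (1 + r * t) ^ (-(m:ℝ)) := by
                      refine mul_le_mul e3 e4 (by positivity) (by positivity)
                    have h6 : (0:ℝ) ≤ (1 + Y) ^ (-2:ℝ) := by positivity
                    have h7 : (0:ℝ) ≤ 1/a := by positivity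
                    nlinarith [mul_le_mul_of_nonneg_left hmul h7]
                _ = c * (1 + Y) ^ (-2:ℝ) := by rw [hc]
          _ = ENNReal.ofReal c * ENNReal.ofReal ((1 + t)⁻¹) := by
              have : ∀ Y : ℝ, ENNReal.ofReal (c * (1 + Y) ^ (-2:ℝ))
                  = ENNReal.ofReal c * ENNReal.ofReal ((1 + Y) ^ (-2:ℝ)) := fun Y =>
                ENNReal.ofReal_mul hc0
              simp_rw [this]
              rw [lintegral_const_mul' _ _ ENNReal.ofReal_ne_top, lint_one_add_Ioi t ht]
      calc ENNReal.ofReal ((f' t) ^ 2 * t ^ (1 - a)) *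
            (∫⁻ Y in Ioi t, ENNReal.ofReal (Y ^ (1 - (1 - a)) / (1 - (1 - a))) * G Y)
          ≤ ENNReal.ofReal ((f' t) ^ 2 * t ^ (1 - a)) *
              (ENNReal.ofReal c * ENNReal.ofReal ((1 + t)⁻¹)) := mul_le_mul_right hTail _
        _ = ENNReal.ofReal ((f' t) ^ 2 * t ^ (1 - a)) * ENNReal.ofReal (c * (1 + t)⁻¹) := by
            rw [ENNReal.ofReal_mul hc0]
        _ = ENNReal.ofReal ((f' t) ^ 2 * t ^ (1 - a) * (c * (1 + t)⁻¹)) := by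
            rw [← ENNReal.ofReal_mul (by positivity)]
        _ ≤ ENNReal.ofReal ((1/a) *
              ((f' t) ^ 2 * (1 + t) ^ (-(k - 2)) * (t ^ (-a) * (1 + r * t) ^ (-(m:ℝ))))) := by
            refine ENNReal.ofReal_le_ofReal ?_
            have et : t ^ ((1:ℝ) - a) = t * t ^ (-a) := by
              rw [show (1:ℝ) - a = 1 + (-a) from by ring, Real.rpow_add ht, Real.rpow_one]
            have ek : (1 + t) ^ (-(k - 2)) = (1 + t) ^ ((2:ℝ) - k) := by
              rw [show -(k - 2) = (2:ℝ) - k from by ring]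
            have hq : t * (1 + t)⁻¹ ≤ 1 := by
              rw [← div_eq_mul_inv, div_le_one (by linarith)]; linarith
            have hX : (0:ℝ) ≤ (1/a) *
                ((f' t) ^ 2 * (1 + t) ^ ((2:ℝ) - k) * (t ^ (-a) * (1 + r * t) ^ (-(m:ℝ)))) := by
              positivity
            calc (f' t) ^ 2 * t ^ (1 - a) * (c * (1 + t)⁻¹)
                = ((1/a) * ((f' t) ^ 2 * (1 + t) ^ ((2:ℝ) - k) *
                    (t ^ (-a) * (1 + r * t) ^ (-(m:ℝ))))) * (t * (1 + t)⁻¹) := by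
                  rw [et, hc]; ring
              _ ≤ ((1/a) * ((f' t) ^ 2 * (1 + t) ^ ((2:ℝ) - k) *
                    (t ^ (-a) * (1 + r * t) ^ (-(m:ℝ))))) * 1 :=
                  mul_le_mul_of_nonneg_left hq hX
              _ = (1/a) * ((f' t) ^ 2 * (1 + t) ^ (-(k - 2)) *
                    (t ^ (-a) * (1 + r * t) ^ (-(m:ℝ)))) := by
                  rw [ek]; ring
        _ = ENNReal.ofReal (1/a) * ENNReal.ofReal
              ((f' t) ^ 2 * (1 + t) ^ (-(k - 2)) * (t ^ (-a) * (1 + r * t) ^ (-(m:ℝ)))) := by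
            rw [← ENNReal.ofReal_mul (by positivity)]
    calc ∫⁻ t in Ioi (0:ℝ), ENNReal.ofReal ((f' t) ^ 2 * t ^ (1 - a)) *
          (∫⁻ Y in Ioi t, ENNReal.ofReal (Y ^ (1 - (1 - a)) / (1 - (1 - a))) * G Y)
        ≤ ∫⁻ t in Ioi (0:ℝ), ENNReal.ofReal (1/a) * ENNReal.ofReal
            ((f' t) ^ 2 * (1 + t) ^ (-(k - 2)) * (t ^ (-a) * (1 + r * t) ^ (-(m:ℝ)))) := by
          refine lintegral_mono_ae ?_
          filter_upwards [ae_restrict_mem measurableSet_Ioi] with t ht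
          exact hstep t ht
      _ = ENNReal.ofReal (1/a) * ∫⁻ t in Ioi (0:ℝ), ENNReal.ofReal
            ((f' t) ^ 2 * (1 + t) ^ (-(k - 2)) * (t ^ (-a) * (1 + r * t) ^ (-(m:ℝ)))) :=
          lintegral_const_mul' _ _ ENNReal.ofReal_ne_top
  · -- part (ii)
    intro hO
    have hf0 : f 0 = 0 :=
      f0_zero (k := k) (by linarith) f f' (hf'int 1 zero_le_one) hfrepr hO
    set G : ℝ → ℝ≥0∞ :=
      fun Y => ENNReal.ofReal (Y ^ (-k) * (Y ^ (-a) * (1 + r * Y) ^ (-(m:ℝ)))) with hG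
    have hGmeas : Measurable G := by fun_prop
    have hrep : ∀ Y : ℝ, 0 ≤ Y → f Y = ∫ t in (0:ℝ)..Y, f' t := fun Y hY => by
      rw [hfrepr Y hY, hf0, zero_add]
    have hLHS : (∫⁻ Y in Ioi (0:ℝ), ENNReal.ofReal
          ((f Y) ^ 2 * Y ^ (-k) * (Y ^ (-a) * (1 + r * Y) ^ (-(m:ℝ)))))
        = ∫⁻ Y in Ioi (0:ℝ), ENNReal.ofReal ((∫ t in (0:ℝ)..Y, f' t) ^ 2) * G Y := by
      refine setLIntegral_congr_fun measurableSet_Ioi (fun Y hY => ?_)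
      rw [← hrep Y (le_of_lt hY), mul_assoc, ENNReal.ofReal_mul (sq_nonneg _)]
    rw [hLHS]
    refine (core f' hf'int (b := 0) le_rfl one_pos G hGmeas).trans ?_
    have hka : (1:ℝ) - k - a < -1 := by linarith
    have hstep : ∀ t : ℝ, t ∈ Ioi (0:ℝ) →
        ENNReal.ofReal ((f' t) ^ 2 * t ^ (0:ℝ)) *
          (∫⁻ Y in Ioi t, ENNReal.ofReal (Y ^ (1 - (0:ℝ)) / (1 - (0:ℝ))) * G Y)
        ≤ ENNReal.ofReal (1/a) * ENNReal.ofReal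
            ((f' t) ^ 2 * t ^ (-(k - 2)) * (t ^ (-a) * (1 + r * t) ^ (-(m:ℝ)))) := by
      intro t ht
      rw [mem_Ioi] at ht
      set vt : ℝ := (1 + r * t) ^ (-(m:ℝ)) with hvt
      have hvt0 : 0 ≤ vt := by positivity
      have hTail : (∫⁻ Y in Ioi t, ENNReal.ofReal (Y ^ (1 - (0:ℝ)) / (1 - (0:ℝ))) * G Y)
          ≤ ENNReal.ofReal vt *
            ENNReal.ofReal (t ^ ((1:ℝ) - k - a + 1) / (-((1:ℝ) - k - a + 1))) := by
        calc ∫⁻ Y in Ioi t, ENNReal.ofReal (Y ^ (1 - (0:ℝ)) / (1 - (0:ℝ))) * G Y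
            ≤ ∫⁻ Y in Ioi t, ENNReal.ofReal (vt * Y ^ ((1:ℝ) - k - a)) := by
              refine lintegral_mono_ae ?_
              filter_upwards [ae_restrict_mem measurableSet_Ioi] with Y hY
              rw [mem_Ioi] at hY
              have hY0 : 0 < Y := ht.trans hY
              rw [hG, ← ENNReal.ofReal_mul (by positivity)]
              refine ENNReal.ofReal_le_ofReal ?_
              have e0 : Y ^ ((1:ℝ) - (0:ℝ)) / (1 - (0:ℝ)) = Y := by
                norm_num
              have e : Y ^ ((1:ℝ) - k - a) = Y * (Y ^ (-k) * Y ^ (-a)) := by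
                rw [show (1:ℝ) - k - a = 1 + (-k + -a) from by ring, Real.rpow_add hY0,
                  Real.rpow_add hY0, Real.rpow_one]
              have e4 : (1 + r * Y) ^ (-(m:ℝ)) ≤ vt := hvmono ht hY.le
              calc Y ^ ((1:ℝ) - (0:ℝ)) / (1 - (0:ℝ)) *
                    (Y ^ (-k) * (Y ^ (-a) * (1 + r * Y) ^ (-(m:ℝ))))
                  = (Y * (Y ^ (-k) * Y ^ (-a))) * (1 + r * Y) ^ (-(m:ℝ)) := by
                    rw [e0]; ring
                _ = Y ^ ((1:ℝ) - k - a) * (1 + r * Y) ^ (-(m:ℝ)) := by rw [e]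
                _ ≤ Y ^ ((1:ℝ) - k - a) * vt :=
                    mul_le_mul_of_nonneg_left e4 (by positivity)
                _ = vt * Y ^ ((1:ℝ) - k - a) := mul_comm _ _
          _ = ENNReal.ofReal vt *
              ENNReal.ofReal (t ^ ((1:ℝ) - k - a + 1) / (-((1:ℝ) - k - a + 1))) := by
              have : ∀ Y : ℝ, ENNReal.ofReal (vt * Y ^ ((1:ℝ) - k - a))
                  = ENNReal.ofReal vt * ENNReal.ofReal (Y ^ ((1:ℝ) - k - a)) := fun Y =>
                ENNReal.ofReal_mul hvt0
              simp_rw [this]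
              rw [lintegral_const_mul' _ _ ENNReal.ofReal_ne_top, lint_rpow_Ioi hka ht]
      calc ENNReal.ofReal ((f' t) ^ 2 * t ^ (0:ℝ)) *
            (∫⁻ Y in Ioi t, ENNReal.ofReal (Y ^ (1 - (0:ℝ)) / (1 - (0:ℝ))) * G Y)
          ≤ ENNReal.ofReal ((f' t) ^ 2 * t ^ (0:ℝ)) *
              (ENNReal.ofReal vt *
                ENNReal.ofReal (t ^ ((1:ℝ) - k - a + 1) / (-((1:ℝ) - k - a + 1)))) :=
            mul_le_mul_right hTail _
        _ = ENNReal.ofReal ((f' t) ^ 2 * t ^ (0:ℝ)) *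
              ENNReal.ofReal (vt * (t ^ ((1:ℝ) - k - a + 1) / (-((1:ℝ) - k - a + 1)))) := by
            rw [ENNReal.ofReal_mul hvt0]
        _ = ENNReal.ofReal ((f' t) ^ 2 * t ^ (0:ℝ) *
              (vt * (t ^ ((1:ℝ) - k - a + 1) / (-((1:ℝ) - k - a + 1))))) := by
            rw [← ENNReal.ofReal_mul (by positivity)]
        _ ≤ ENNReal.ofReal ((1/a) *
              ((f' t) ^ 2 * t ^ (-(k - 2)) * (t ^ (-a) * (1 + r * t) ^ (-(m:ℝ))))) := by
            refine ENNReal.ofReal_le_ofReal ?_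
            have e1 : t ^ ((1:ℝ) - k - a + 1) = t ^ (-(k - 2)) * t ^ (-a) := by
              rw [show (1:ℝ) - k - a + 1 = -(k - 2) + -a from by ring, Real.rpow_add ht]
            have e2 : -((1:ℝ) - k - a + 1) = k + a - 2 := by ring
            have hX : (0:ℝ) ≤ (f' t) ^ 2 * t ^ (-(k - 2)) * (t ^ (-a) * vt) := by
              positivity
            have hinv : 1 / (k + a - 2) ≤ 1 / a :=
              one_div_le_one_div_of_le ha0 (by linarith)
            calc (f' t) ^ 2 * t ^ (0:ℝ) * (vt * (t ^ ((1:ℝ) - k - a + 1) / (-((1:ℝ) - k - a + 1))))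
                = ((f' t) ^ 2 * t ^ (-(k - 2)) * (t ^ (-a) * vt)) * (1 / (k + a - 2)) := by
                  rw [e1, e2, Real.rpow_zero]; ring
              _ ≤ ((f' t) ^ 2 * t ^ (-(k - 2)) * (t ^ (-a) * vt)) * (1 / a) :=
                  mul_le_mul_of_nonneg_left hinv hX
              _ = (1/a) * ((f' t) ^ 2 * t ^ (-(k - 2)) * (t ^ (-a) * (1 + r * t) ^ (-(m:ℝ)))) := by
                  rw [hvt]; ring
        _ = ENNReal.ofReal (1/a) * ENNReal.ofReal
              ((f' t) ^ 2 * t ^ (-(k - 2)) * (t ^ (-a) * (1 + r * t) ^ (-(m:ℝ)))) := by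
            rw [← ENNReal.ofReal_mul (by positivity)]
    calc ∫⁻ t in Ioi (0:ℝ), ENNReal.ofReal ((f' t) ^ 2 * t ^ (0:ℝ)) *
          (∫⁻ Y in Ioi t, ENNReal.ofReal (Y ^ (1 - (0:ℝ)) / (1 - (0:ℝ))) * G Y)
        ≤ ∫⁻ t in Ioi (0:ℝ), ENNReal.ofReal (1/a) * ENNReal.ofReal
            ((f' t) ^ 2 * t ^ (-(k - 2)) * (t ^ (-a) * (1 + r * t) ^ (-(m:ℝ)))) := by
          refine lintegral_mono_ae ?_
          filter_upwards [ae_restrict_mem measurableSet_Ioi] with t ht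
          exact hstep t ht
      _ = ENNReal.ofReal (1/a) * ∫⁻ t in Ioi (0:ℝ), ENNReal.ofReal
            ((f' t) ^ 2 * t ^ (-(k - 2)) * (t ^ (-a) * (1 + r * t) ^ (-(m:ℝ)))) :=
          lintegral_const_mul' _ _ ENNReal.ofReal_ne_top
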